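/- If w is a factor of the paperfolding word, then the reversed complement of w (reverse w and swap 0 ↔ 1) is also a factor of the paperfolding word. -/

import Mathlib

/-- letter of the ordinary paperfolding word at position `m` (positions start at 1):
writing `m = k * 2^j` with `k` odd, the letter is `0` if `k ≡ 1 (mod 4)` and `1` otherwise. -/
def pf (m : ℕ) : ℕ := if (m / 2 ^ (padicValNat 2 m)) % 4 = 1 then 0 else 1

/-- the length-`n` factor of `w` starting at position `i`. -/
def factorAt (w : ℕ → ℕ) (i n : ℕ) : List ℕ := (List.range n).map (fun j => w (i + j))

/-- `u` is a factor of the 1-indexed infinite word `w`. -/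
def IsFactor (w : ℕ → ℕ) (u : List ℕ) : Prop := ∃ i ≥ 1, u = factorAt w i u.length

lemma pf_pow_mul (j k : ℕ) (hk : k % 2 = 1) :
    pf (2 ^ j * k) = if k % 4 = 1 then 0 else 1 := by
  have hk0 : k ≠ 0 := by omega
  have h2 : ¬ (2 : ℕ) ∣ k := by omega
  have hval : padicValNat 2 (2 ^ j * k) = j := by
    rw [padicValNat.mul (by positivity) hk0, padicValNat.prime_pow,
      padicValNat.eq_zero_of_not_dvd h2]
    omega
  unfold pf
  rw [hval, Nat.mul_div_cancel_left _ (by positivity)]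

lemma pf_complement (N m : ℕ) (h1 : 1 ≤ m) (h2 : m < 2 ^ N) :
    pf (2 ^ (N + 1) - m) = 1 - pf m := by
  set j := padicValNat 2 m with hj
  set k := m / 2 ^ j with hk
  have hdvd : 2 ^ j ∣ m := pow_padicValNat_dvd
  have hm : 2 ^ j * k = m := Nat.mul_div_cancel' hdvd
  have hkodd : k % 2 = 1 := by
    rcases Nat.mod_two_eq_zero_or_one k with he | ho
    · exfalso
      have h2k : (2 : ℕ) ∣ k := by omega
      obtain ⟨c, hc⟩ := h2k
      have : 2 ^ (j + 1) ∣ m := ⟨c, by rw [← hm, hc]; ring⟩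
      exact pow_succ_padicValNat_not_dvd (by omega) this
    · exact ho
  have hjle : 2 ^ j ≤ m := Nat.le_of_dvd (by omega) hdvd
  have hjN : j < N := by
    by_contra h
    have : 2 ^ N ≤ 2 ^ j := Nat.pow_le_pow_right (by norm_num) (by omega)
    omega
  have hpow : 2 ^ j * 2 ^ (N + 1 - j) = 2 ^ (N + 1) := by
    rw [← pow_add]; congr 1; omega
  have hklt : k < 2 ^ (N + 1 - j) := by
    by_contra h
    have : 2 ^ j * 2 ^ (N + 1 - j) ≤ 2 ^ j * k := Nat.mul_le_mul_left _ (by omega)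
    omega
  set K := 2 ^ (N + 1 - j) - k with hK
  have hsub : 2 ^ (N + 1) - m = 2 ^ j * K := by
    rw [hK, Nat.mul_sub, hpow, hm]
  have hE4 : 2 ^ (N + 1 - j) % 4 = 0 := by
    have : (4 : ℕ) ∣ 2 ^ (N + 1 - j) := by
      have : (2:ℕ) ^ 2 ∣ 2 ^ (N + 1 - j) := pow_dvd_pow 2 (by omega)
      simpa using this
    omega
  have hKodd : K % 2 = 1 := by
    have h2 : 2 ^ (N + 1 - j) % 2 = 0 := by omega
    omega
  rw [hsub, ← hm, pf_pow_mul j K hKodd, pf_pow_mul j k hkodd]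
  have hk4 : k % 4 = 1 ∨ k % 4 = 3 := by omega
  have hK4 : K % 4 = (if k % 4 = 1 then 3 else 1) := by
    rcases hk4 with h | h <;> simp [h] <;> omega
  rcases hk4 with h | h <;> simp [h] at hK4 ⊢ <;> omega

/-- If `w` is a factor of the paperfolding word, so is its reversed complement. -/
theorem paperfolding_reversed_complement (u : List ℕ) (hu : IsFactor pf u) :
    IsFactor pf (u.reverse.map (fun x => 1 - x)) := by
  obtain ⟨i, hi, hu⟩ := hu
  obtain ⟨n, hn⟩ : ∃ n, u.length = n := ⟨_, rfl⟩
  rw [hn] at hu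
  set N := i + n with hNdef
  have hN : i + n < 2 ^ N := Nat.lt_two_pow_self
  have hpow : 2 ^ N ≤ 2 ^ (N + 1) := Nat.pow_le_pow_right (by norm_num) (by omega)
  refine ⟨2 ^ (N + 1) - (i + n - 1), by omega, ?_⟩
  apply List.ext_getElem
  · simp [factorAt]
  · intro t h1 h2
    have htn : t < n := by simp [hn] at h1; omega
    rw [List.getElem_map, List.getElem_reverse, List.getElem_of_eq hu]
    simp only [factorAt, List.getElem_map, List.getElem_range]
    rw [hn, ← pf_complement N (i + (n - 1 - t)) (by omega) (by omega)]
    congr 1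
    omega
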